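/- arXiv:1201.3928 — 4 statements merged into one kernel-verified Lean document; each statement's English description precedes it below -/
import Mathlib

section
/- Fundamental Lemma: Let P(λ) = Σ_{n≤N} pₙλⁿ and Q(λ) = Σ_{n≤M} qₙλⁿ be symbols with coefficients in R. Then the bilinear residue equation Res_λ ( P(λ) · Q^y(−λ) · e^{−yλ/h} ) dλ = 0, holding identically as an element of R[[y]] (each coefficient of a power of y being a finite sum in R), is equivalent to the pseudo-differential operator equation ( P(h∂) · Q(h∂)* )₋ = 0. -/
open scoped BigOperators

/-- Generalized binomial coefficient `C(k,l) = k(k-1)⋯(k-l+1)/l!` for `k : ℤ`. -/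
def gbinom (k : ℤ) (l : ℕ) : ℚ :=
  (∏ i ∈ Finset.range l, ((k : ℚ) - i)) / (Nat.factorial l)

/-- Pseudo-differential operators (and symbols): coefficient functions `ℤ → R`
with support bounded above.  The parameter `d` (the derivation) determines the product. -/
structure PDO (R : Type) [CommRing R] [Algebra ℚ R] (d : R →+ R) where
  coeff : ℤ → R
  bdd : ∃ N : ℤ, ∀ n : ℤ, N < n → coeff n = 0

namespace PDO

variable {R : Type} [CommRing R] [Algebra ℚ R] {d : R →+ R}

theorem ext' {A B : PDO R d} (h : A.coeff = B.coeff) : A = B := by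
  cases A; cases B; cases h; rfl

set_option linter.unusedSectionVars false in
theorem iterD_zero (d : R →+ R) (j : ℕ) : d^[j] (0 : R) = 0 := by
  induction j with
  | zero => rfl
  | succ j ih => rw [Function.iterate_succ_apply', ih, map_zero]

instance : Zero (PDO R d) := ⟨⟨fun _ => 0, ⟨0, fun _ _ => rfl⟩⟩⟩

instance : One (PDO R d) :=
  ⟨⟨fun n => if n = 0 then 1 else 0, ⟨0, fun n hn => if_neg (by omega)⟩⟩⟩

instance : Add (PDO R d) :=
  ⟨fun A B => ⟨fun n => A.coeff n + B.coeff n, by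
    obtain ⟨N, hN⟩ := A.bdd
    obtain ⟨M, hM⟩ := B.bdd
    exact ⟨max N M, fun n hn => by
      show A.coeff n + B.coeff n = 0
      rw [hN n (lt_of_le_of_lt (le_max_left N M) hn),
        hM n (lt_of_le_of_lt (le_max_right N M) hn), add_zero]⟩⟩⟩

instance : Neg (PDO R d) :=
  ⟨fun A => ⟨fun n => -A.coeff n, by
    obtain ⟨N, hN⟩ := A.bdd
    exact ⟨N, fun n hn => by show -A.coeff n = 0; rw [hN n hn, neg_zero]⟩⟩⟩

instance : SMul ℚ (PDO R d) :=
  ⟨fun c A => ⟨fun n => c • A.coeff n, by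
    obtain ⟨N, hN⟩ := A.bdd
    exact ⟨N, fun n hn => by show c • A.coeff n = 0; rw [hN n hn, smul_zero]⟩⟩⟩

instance : AddCommGroup (PDO R d) where
  add := (· + ·)
  zero := 0
  neg := Neg.neg
  add_assoc A B C := ext' (funext fun n => add_assoc (A.coeff n) (B.coeff n) (C.coeff n))
  zero_add A := ext' (funext fun n => zero_add (A.coeff n))
  add_zero A := ext' (funext fun n => add_zero (A.coeff n))
  add_comm A B := ext' (funext fun n => add_comm (A.coeff n) (B.coeff n))
  neg_add_cancel A := ext' (funext fun n => neg_add_cancel (A.coeff n))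
  nsmul := nsmulRec
  zsmul := zsmulRec

/-- The product of pseudo-differential operators, determined by the commutation rule
`∂^k · f = Σ_{l ≥ 0} C(k,l) (∂^l f) ∂^(k-l)`. -/
noncomputable instance : Mul (PDO R d) :=
  ⟨fun A B =>
    ⟨fun n => ∑ᶠ (k : ℤ) (m : ℤ),
        if _ : 0 ≤ k + m - n then
          A.coeff k * (gbinom k (k + m - n).toNat • (d^[(k + m - n).toNat] (B.coeff m)))
        else 0, by
      obtain ⟨N, hN⟩ := A.bdd
      obtain ⟨M, hM⟩ := B.bdd
      refine ⟨N + M, fun n hn => ?_⟩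
      have hz : ∀ k m : ℤ,
          (if _ : 0 ≤ k + m - n then
            A.coeff k * (gbinom k (k + m - n).toNat • (d^[(k + m - n).toNat] (B.coeff m)))
          else 0) = 0 := by
        intro k m
        by_cases hl : 0 ≤ k + m - n
        · rw [dif_pos hl]
          by_cases hk : N < k
          · rw [hN k hk, zero_mul]
          · rw [hM m (by omega), iterD_zero, smul_zero, mul_zero]
        · rw [dif_neg hl]
      simp only [hz, finsum_zero]⟩⟩

noncomputable def npow (A : PDO R d) : ℕ → PDO R d
  | 0 => 1
  | n + 1 => npow A n * A

noncomputable instance : Pow (PDO R d) ℕ := ⟨fun A n => A.npow n⟩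

/-- The monomial `r ∂^k`. -/
def mono (r : R) (k : ℤ) : PDO R d :=
  ⟨fun n => if n = k then r else 0, ⟨k, fun n hn => if_neg (by omega)⟩⟩

/-- The constant (order-zero) operator `r`. -/
def const (r : R) : PDO R d := mono r 0

/-- The operator `∂`. -/
def del : PDO R d := mono (1 : R) 1

/-- The operator `h∂`. -/
def hdel (h : Rˣ) : PDO R d := mono (h : R) 1

/-- The Lax operator `L = h²∂² + 2u`. -/
def Lop (h : Rˣ) (u : R) : PDO R d :=
  ⟨fun n => if n = 2 then (h : R) ^ 2 else if n = 0 then 2 * u else 0,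
   ⟨2, fun n hn => by
      show (if n = 2 then (h : R) ^ 2 else if n = 0 then 2 * u else 0) = 0
      rw [if_neg (by omega), if_neg (by omega)]⟩⟩

/-- The differential part `A₊`. -/
def pos (A : PDO R d) : PDO R d :=
  ⟨fun n => if 0 ≤ n then A.coeff n else 0, by
    obtain ⟨N, hN⟩ := A.bdd
    refine ⟨N, fun n hn => ?_⟩
    show (if 0 ≤ n then A.coeff n else 0) = 0
    by_cases h0 : (0 : ℤ) ≤ n
    · rw [if_pos h0]; exact hN n hn
    · rw [if_neg h0]⟩

/-- The integral part `A₋ = A − A₊`. -/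
def negp (A : PDO R d) : PDO R d :=
  ⟨fun n => if n < 0 then A.coeff n else 0, ⟨0, fun n hn => if_neg (by omega)⟩⟩

/-- The residue `Res_∂ A = a₋₁`. -/
def res (A : PDO R d) : R := A.coeff (-1)

/-- The formal adjoint, determined by `(f ∂^k)* = (−∂)^k · f`. -/
noncomputable def adj (A : PDO R d) : PDO R d :=
  ⟨fun n => ∑ᶠ k : ℤ,
      if _ : 0 ≤ k - n then
        (((-1 : ℚ) ^ k) * gbinom k (k - n).toNat) • (d^[(k - n).toNat] (A.coeff k))
      else 0, by
    obtain ⟨N, hN⟩ := A.bdd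
    refine ⟨N, fun n hn => ?_⟩
    have hz : ∀ k : ℤ, (if _ : 0 ≤ k - n then
        (((-1 : ℚ) ^ k) * gbinom k (k - n).toNat) • (d^[(k - n).toNat] (A.coeff k))
      else 0) = 0 := by
      intro k
      by_cases hl : 0 ≤ k - n
      · rw [dif_pos hl, hN k (by omega), iterD_zero, smul_zero]
      · rw [dif_neg hl]
    simp only [hz, finsum_zero]⟩

/-- The operator `P(h∂) = Σ pₙ hⁿ ∂ⁿ` associated to the symbol `P(λ) = Σ pₙ λⁿ`. -/
noncomputable def ofSymbol (h : Rˣ) (A : PDO R d) : PDO R d :=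
  ⟨fun n => A.coeff n * ((h ^ n : Rˣ) : R), by
    obtain ⟨N, hN⟩ := A.bdd
    exact ⟨N, fun n hn => by show A.coeff n * ((h ^ n : Rˣ) : R) = 0; rw [hN n hn, zero_mul]⟩⟩

/-- Apply `d^[i]` to each coefficient. -/
def mapD (i : ℕ) (A : PDO R d) : PDO R d :=
  ⟨fun n => d^[i] (A.coeff n), by
    obtain ⟨N, hN⟩ := A.bdd
    exact ⟨N, fun n hn => by show d^[i] (A.coeff n) = 0; rw [hN n hn, iterD_zero]⟩⟩

/-- The coefficientwise extension of an additive map `D : R →+ R`. -/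
def mapHom (D : R →+ R) (A : PDO R d) : PDO R d :=
  ⟨fun n => D (A.coeff n), by
    obtain ⟨N, hN⟩ := A.bdd
    exact ⟨N, fun n hn => by show D (A.coeff n) = 0; rw [hN n hn, map_zero]⟩⟩

/-- The commutator `[A, B] = AB − BA`. -/
noncomputable def comm (A B : PDO R d) : PDO R d := A * B - B * A

end PDO

/-- The Leibniz rule: `d` is a derivation. -/
def Leibniz {R : Type} [CommRing R] [Algebra ℚ R] (d : R →+ R) : Prop :=
  ∀ a b : R, d (a * b) = a * d b + b * d a

/-- `aₙ = 1/(2n+1)!!`. -/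
def kdvA (n : ℕ) : ℚ := 1 / (Nat.doubleFactorial (2 * n + 1))

/-- `bₙ = (2n−1)!!` (with `b₀ = (−1)!! = 1`). -/
def kdvB (n : ℕ) : ℚ := (Nat.doubleFactorial (2 * n - 1) : ℕ)



section FLaux

open Finset

lemma gbinom_zero (k : ℤ) : gbinom k 0 = 1 := by simp [gbinom]

lemma gbinom_succ (k : ℤ) (l : ℕ) :
    gbinom k (l+1) = gbinom k l * ((k:ℚ) - l) / (l+1) := by
  unfold gbinom
  rw [Finset.prod_range_succ, Nat.factorial_succ, div_mul_eq_mul_div, div_div]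
  push_cast
  rw [mul_comm ((l:ℚ)+1)]

lemma gbinom_absorb (k : ℤ) (l : ℕ) :
    ((l:ℚ)+1) * gbinom k (l+1) = (k:ℚ) * gbinom (k-1) l := by
  unfold gbinom
  rw [Finset.prod_range_succ', Nat.factorial_succ]
  have h2 : ∀ i ∈ Finset.range l, ((k:ℚ) - (↑(i+1))) = ((k - 1 : ℤ) : ℚ) - i := by
    intro i _; push_cast; ring
  rw [Finset.prod_congr rfl h2]
  have hl : (l.factorial : ℚ) ≠ 0 := by exact_mod_cast Nat.factorial_ne_zero l
  have hl1 : ((l:ℚ)+1) ≠ 0 := by positivity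
  push_cast
  rw [mul_div_assoc', mul_div_assoc', div_eq_div_iff (by positivity) hl]
  ring

lemma gbinom_eq_zero_of (a : ℤ) (r : ℕ) (h0 : 0 ≤ a) (hr : a < r) : gbinom a r = 0 := by
  unfold gbinom
  rw [Finset.prod_eq_zero (i := a.toNat) (Finset.mem_range.mpr (by omega))]
  · simp
  · rw [sub_eq_zero]
    exact_mod_cast (Int.toNat_of_nonneg h0).symm

lemma gbinom_neg (j r : ℕ) : gbinom (-1 - (j:ℤ)) r = (-1:ℚ)^r * ((j+r).choose r) := by
  induction r with
  | zero => simp [gbinom_zero]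
  | succ r ih =>
    rw [gbinom_succ, ih]
    have h1 : ((-1 - (j:ℤ) : ℤ) : ℚ) - r = -(((j:ℚ) + r) + 1) := by push_cast; ring
    rw [h1]
    have h3 := Nat.add_one_mul_choose_eq (j+r) r
    have h4 : (j + (r+1)) = (j+r)+1 := by omega
    have h2 : (((j + (r+1)).choose (r+1) : ℕ) : ℚ) * ((r:ℚ)+1) = (((j:ℚ)+(r:ℚ)+1)) * ((j+r).choose r) := by
      rw [h4]
      have h3q : ((j:ℚ) + r + 1) * ((j + r).choose r : ℚ) = ((j + r + 1).choose (r + 1) : ℚ) * ((r:ℚ) + 1) := by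
        exact_mod_cast h3
      linarith [h3q]
    have hr1 : ((r:ℚ)+1) ≠ 0 := by positivity
    rw [pow_succ]
    field_simp
    linear_combination h2

lemma gbinom_vandermonde : ∀ (r : ℕ) (k k' : ℤ),
    ∑ s ∈ Finset.range (r+1), gbinom k s * gbinom k' (r - s) = gbinom (k+k') r := by
  intro r
  induction r with
  | zero => intro k k'; simp [gbinom_zero]
  | succ r ih =>
    intro k k'
    have hr1 : ((r:ℚ)+1) ≠ 0 := by positivity
    apply mul_left_cancel₀ hr1
    rw [Finset.mul_sum]
    have expand : ∀ s ∈ Finset.range (r+1+1),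
        ((r:ℚ)+1) * (gbinom k s * gbinom k' (r+1-s))
        = ((s:ℚ) * gbinom k s) * gbinom k' (r+1-s)
          + gbinom k s * ((((r+1-s : ℕ)):ℚ) * gbinom k' (r+1-s)) := by
      intro s hs
      have hs' : s < r+2 := Finset.mem_range.mp hs
      have hc : (((r+1-s : ℕ)):ℚ) = (r:ℚ) + 1 - s := by
        have h5 : ((r+1-s : ℕ):ℚ) = ((r+1 : ℕ):ℚ) - (s:ℚ) := by
          exact_mod_cast Nat.cast_sub (by omega)
        rw [h5]; push_cast; ring
      rw [hc]; ring
    rw [Finset.sum_congr rfl expand, Finset.sum_add_distrib]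
    -- first sum
    have first : ∑ s ∈ Finset.range (r+1+1), ((s:ℚ) * gbinom k s) * gbinom k' (r+1-s)
        = (k:ℚ) * gbinom (k+k'-1) r := by
      rw [Finset.sum_range_succ']
      simp only [Nat.cast_zero, zero_mul]
      have step : ∀ s ∈ Finset.range (r+1),
          (((s+1 : ℕ):ℚ) * gbinom k (s+1)) * gbinom k' (r+1-(s+1))
          = (k:ℚ) * (gbinom (k-1) s * gbinom k' (r-s)) := by
        intro s _
        have h6 : ((s+1 : ℕ):ℚ) = (s:ℚ)+1 := by push_cast; ring
        have h7 : r+1-(s+1) = r-s := by omega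
        rw [h6, h7, gbinom_absorb]; ring
      rw [Finset.sum_congr rfl step, ← Finset.mul_sum, ih (k-1) k']
      have : k-1+k' = k+k'-1 := by ring
      rw [this]
      simp
    -- second sum
    have second : ∑ s ∈ Finset.range (r+1+1), gbinom k s * ((((r+1-s : ℕ)):ℚ) * gbinom k' (r+1-s))
        = (k':ℚ) * gbinom (k+k'-1) r := by
      rw [Finset.sum_range_succ]
      have hlast : r+1-(r+1) = 0 := by omega
      rw [hlast]
      simp only [Nat.cast_zero, zero_mul, mul_zero, add_zero]
      have step : ∀ s ∈ Finset.range (r+1),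
          gbinom k s * ((((r+1-s : ℕ)):ℚ) * gbinom k' (r+1-s))
          = (k':ℚ) * (gbinom k s * gbinom (k'-1) (r-s)) := by
        intro s hs
        have hs' : s < r+1 := Finset.mem_range.mp hs
        have h7 : r+1-s = (r-s)+1 := by omega
        have h6 : (((r-s)+1 : ℕ):ℚ) = ((r-s : ℕ):ℚ)+1 := by push_cast; ring
        rw [h7, h6, gbinom_absorb]; ring
      rw [Finset.sum_congr rfl step, ← Finset.mul_sum, ih k (k'-1)]
      have : k+(k'-1) = k+k'-1 := by ring
      rw [this]
    rw [first, second, gbinom_absorb (k+k') r]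
    push_cast
    ring


section Rside

variable {R : Type} [CommRing R] [Algebra ℚ R] {d : R →+ R}

lemma d_one' (hd : Leibniz d) : d (1 : R) = 0 := by
  have h1 := hd 1 1
  simp only [mul_one, one_mul] at h1
  have h2 : d (1:R) + d 1 = d 1 + 0 := by rw [add_zero]; exact h1.symm
  exact (add_left_cancel h2)

lemma d_inv_unit (hd : Leibniz d) (u : Rˣ) (hu : d (u : R) = 0) :
    d ((u⁻¹ : Rˣ) : R) = 0 := by
  have h1 : d ((u : R) * ((u⁻¹ : Rˣ) : R)) = 0 := by
    rw [← Units.val_mul, mul_inv_cancel]; exact d_one' hd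
  rw [hd, hu, mul_zero, add_zero] at h1
  have h2 : ((u⁻¹ : Rˣ) : R) * ((u : R) * d ((u⁻¹ : Rˣ) : R)) = 0 := by rw [h1, mul_zero]
  rw [← mul_assoc, ← Units.val_mul, inv_mul_cancel, Units.val_one, one_mul] at h2
  exact h2

lemma d_unit_npow (hd : Leibniz d) (u : Rˣ) (hu : d (u : R) = 0) (n : ℕ) :
    d ((u ^ n : Rˣ) : R) = 0 := by
  induction n with
  | zero => simpa using d_one' hd
  | succ n ih =>
    rw [pow_succ, Units.val_mul, hd, hu, mul_zero, ih, mul_zero, add_zero]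

lemma d_hzpow (hd : Leibniz d) (h : Rˣ) (hdh : d (h : R) = 0) (k : ℤ) :
    d ((h ^ k : Rˣ) : R) = 0 := by
  cases k with
  | ofNat n => rw [Int.ofNat_eq_coe, zpow_natCast]; exact d_unit_npow hd h hdh n
  | negSucc n => rw [zpow_negSucc]; exact d_inv_unit hd _ (d_unit_npow hd h hdh (n+1))

lemma iterD_mul_unit (hd : Leibniz d) (s : ℕ) (u : R) (hu : d u = 0) (x : R) :
    d^[s] (x * u) = d^[s] x * u := by
  induction s with
  | zero => rfl
  | succ s ih =>
    rw [Function.iterate_succ_apply', ih, Function.iterate_succ_apply',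
      hd, hu, mul_zero, zero_add, mul_comm]

lemma iterD_sum {ι : Type} (s : ℕ) (F : Finset ι) (f : ι → R) :
    d^[s] (∑ i ∈ F, f i) = ∑ i ∈ F, d^[s] (f i) := by
  induction s with
  | zero => rfl
  | succ s ih =>
    rw [Function.iterate_succ_apply', ih, map_sum]
    exact Finset.sum_congr rfl fun i _ => (Function.iterate_succ_apply' d s (f i)).symm

lemma iterD_smul (s : ℕ) (q : ℚ) (x : R) :
    d^[s] (q • x) = q • d^[s] x := by
  induction s with
  | zero => rfl
  | succ s ih =>
    rw [Function.iterate_succ_apply', ih, map_rat_smul, Function.iterate_succ_apply' d s x]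

lemma ofSymbol_coeff (h : Rˣ) (Q : PDO R d) (k : ℤ) :
    (PDO.ofSymbol h Q).coeff k = Q.coeff k * ((h ^ k : Rˣ) : R) := rfl

lemma adj_coeff (hd : Leibniz d) (h : Rˣ) (hdh : d (h : R) = 0) (Q : PDO R d) (N : ℤ)
    (hQ : ∀ n, N < n → Q.coeff n = 0) (m : ℤ) :
    (PDO.adj (PDO.ofSymbol h Q)).coeff m
      = ∑ k ∈ Finset.Icc m N, ((-1:ℚ)^k * gbinom k (k-m).toNat)
          • (d^[(k-m).toNat] (Q.coeff k) * ((h ^ k : Rˣ) : R)) := by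
  have e1 : (PDO.adj (PDO.ofSymbol h Q)).coeff m
      = ∑ᶠ k : ℤ, if _ : 0 ≤ k - m then
          (((-1 : ℚ) ^ k) * gbinom k (k - m).toNat)
            • (d^[(k - m).toNat] ((PDO.ofSymbol h Q).coeff k))
        else 0 := rfl
  rw [e1, finsum_eq_finset_sum_of_support_subset]
  · refine Finset.sum_congr rfl fun k hk => ?_
    rw [Finset.mem_Icc] at hk
    rw [dif_pos (by omega : (0:ℤ) ≤ k - m), ofSymbol_coeff,
      iterD_mul_unit hd _ _ (d_hzpow hd h hdh k)]
  · intro k hk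
    simp only [Function.mem_support] at hk
    rw [Finset.coe_Icc, Set.mem_Icc]
    constructor
    · by_contra hmk
      exact hk (dif_neg (by omega))
    · by_contra hkN
      apply hk
      by_cases h0 : (0:ℤ) ≤ k - m
      · rw [dif_pos h0, ofSymbol_coeff, hQ k (by omega), zero_mul, PDO.iterD_zero, smul_zero]
      · exact dif_neg h0

lemma adj_coeff_zero (hd : Leibniz d) (h : Rˣ) (hdh : d (h : R) = 0) (Q : PDO R d) (N : ℤ)
    (hQ : ∀ n, N < n → Q.coeff n = 0) (m : ℤ) (hm : N < m) :
    (PDO.adj (PDO.ofSymbol h Q)).coeff m = 0 := by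
  rw [adj_coeff hd h hdh Q N hQ m, Finset.Icc_eq_empty (by omega), Finset.sum_empty]

lemma prod_coeff (hd : Leibniz d) (h : Rˣ) (hdh : d (h : R) = 0) (P Q : PDO R d) (N : ℤ)
    (hP : ∀ n, N < n → P.coeff n = 0) (hQ : ∀ n, N < n → Q.coeff n = 0) (n : ℤ) :
    (PDO.ofSymbol h P * PDO.adj (PDO.ofSymbol h Q)).coeff n
      = ∑ k ∈ Finset.Icc (n-N) N, ∑ k' ∈ Finset.Icc (n-k) N,
          ((-1:ℚ)^k' * gbinom (k+k') (k+k'-n).toNat)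
            • (P.coeff k * (d^[(k+k'-n).toNat] (Q.coeff k')
                * (((h ^ k : Rˣ) : R) * ((h ^ k' : Rˣ) : R)))) := by
  set B := PDO.adj (PDO.ofSymbol h Q) with hBdef
  set F : ℤ → ℤ → R := fun k m =>
    if _ : 0 ≤ k + m - n then
      (PDO.ofSymbol h P).coeff k
        * (gbinom k (k + m - n).toNat • (d^[(k + m - n).toNat] (B.coeff m)))
    else 0 with hFdef
  have hB0 : ∀ m, N < m → B.coeff m = 0 := fun m hm =>
    adj_coeff_zero hd h hdh Q N hQ m hm
  have hF0 : ∀ k m, (N < k ∨ N < m ∨ ¬ (0 ≤ k + m - n)) → F k m = 0 := by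
    intro k m hcase
    by_cases h0 : (0:ℤ) ≤ k + m - n
    · rcases hcase with hk | hm | hc
      · simp only [hFdef, dif_pos h0, ofSymbol_coeff, hP k hk, zero_mul]
      · simp only [hFdef, dif_pos h0, hB0 m hm, PDO.iterD_zero, smul_zero, mul_zero]
      · exact absurd h0 hc
    · exact dif_neg h0
  have e1 : (PDO.ofSymbol h P * B).coeff n = ∑ᶠ (k : ℤ), ∑ᶠ (m : ℤ), F k m := rfl
  rw [e1]
  have e2 : ∑ᶠ (k : ℤ), ∑ᶠ (m : ℤ), F k m
      = ∑ k ∈ Finset.Icc (n-N) N, ∑ᶠ (m : ℤ), F k m := by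
    apply finsum_eq_finset_sum_of_support_subset
    intro k hk
    simp only [Function.mem_support] at hk
    rw [Finset.coe_Icc, Set.mem_Icc]
    by_contra hcon
    push_neg at hcon
    apply hk
    by_cases hkN : N < k
    · have : ∀ m : ℤ, F k m = 0 := fun m => hF0 k m (Or.inl hkN)
      simp only [this, finsum_zero]
    · have hk2 : k < n - N := by
        by_contra hc
        push_neg at hc
        exact hkN (hcon hc)
      have : ∀ m : ℤ, F k m = 0 := by
        intro m
        by_cases h0 : (0:ℤ) ≤ k + m - n
        · exact hF0 k m (Or.inr (Or.inl (by omega)))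
        · exact hF0 k m (Or.inr (Or.inr h0))
      simp only [this, finsum_zero]
  rw [e2]
  refine Finset.sum_congr rfl fun k hk => ?_
  rw [Finset.mem_Icc] at hk
  have e3 : ∑ᶠ (m : ℤ), F k m = ∑ m ∈ Finset.Icc (n-k) N, F k m := by
    apply finsum_eq_finset_sum_of_support_subset
    intro m hm
    simp only [Function.mem_support] at hm
    rw [Finset.coe_Icc, Set.mem_Icc]
    constructor
    · by_contra hc
      exact hm (hF0 k m (Or.inr (Or.inr (by omega))))
    · by_contra hc
      exact hm (hF0 k m (Or.inr (Or.inl (by omega))))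
  rw [e3]
  -- expand B.coeff and push the derivation through
  have e4 : ∀ m ∈ Finset.Icc (n-k) N, F k m
      = ∑ k' ∈ Finset.Icc m N,
          (gbinom k (k+m-n).toNat * ((-1:ℚ)^k' * gbinom k' (k'-m).toNat))
            • (P.coeff k * (d^[(k+m-n).toNat + (k'-m).toNat] (Q.coeff k')
              * (((h ^ k : Rˣ) : R) * ((h ^ k' : Rˣ) : R)))) := by
    intro m hm
    rw [Finset.mem_Icc] at hm
    have h0 : (0:ℤ) ≤ k + m - n := by omega
    simp only [hFdef, dif_pos h0]
    rw [hBdef, adj_coeff hd h hdh Q N hQ m, iterD_sum]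
    have e5 : ∀ k' ∈ Finset.Icc m N,
        d^[(k+m-n).toNat] (((-1:ℚ)^k' * gbinom k' (k'-m).toNat)
            • (d^[(k'-m).toNat] (Q.coeff k') * ((h ^ k' : Rˣ) : R)))
        = ((-1:ℚ)^k' * gbinom k' (k'-m).toNat)
            • (d^[(k+m-n).toNat + (k'-m).toNat] (Q.coeff k') * ((h ^ k' : Rˣ) : R)) := by
      intro k' _
      rw [iterD_smul, iterD_mul_unit hd _ _ (d_hzpow hd h hdh k'),
        ← Function.iterate_add_apply]
    rw [Finset.sum_congr rfl e5, Finset.smul_sum, Finset.mul_sum]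
    refine Finset.sum_congr rfl fun k' _ => ?_
    rw [ofSymbol_coeff]
    simp only [Algebra.smul_def, map_mul]
    ring
  rw [Finset.sum_congr rfl e4]
  -- swap the m and k' sums
  rw [Finset.sum_comm' (s' := fun k' => Finset.Icc (n-k) k') (t' := Finset.Icc (n-k) N)
    (by intro m k'; simp only [Finset.mem_Icc]; omega)]
  refine Finset.sum_congr rfl fun k' hk' => ?_
  rw [Finset.mem_Icc] at hk'
  have hr0 : (0:ℤ) ≤ k + k' - n := by omega
  -- the d-exponent is constant on the inner range
  have e6 : ∀ m ∈ Finset.Icc (n-k) k',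
      (gbinom k (k+m-n).toNat * ((-1:ℚ)^k' * gbinom k' (k'-m).toNat))
        • (P.coeff k * (d^[(k+m-n).toNat + (k'-m).toNat] (Q.coeff k')
          * (((h ^ k : Rˣ) : R) * ((h ^ k' : Rˣ) : R))))
      = (gbinom k (k+m-n).toNat * ((-1:ℚ)^k' * gbinom k' (k'-m).toNat))
        • (P.coeff k * (d^[(k+k'-n).toNat] (Q.coeff k')
          * (((h ^ k : Rˣ) : R) * ((h ^ k' : Rˣ) : R)))) := by
    intro m hm
    rw [Finset.mem_Icc] at hm
    have : (k+m-n).toNat + (k'-m).toNat = (k+k'-n).toNat := by omega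
    rw [this]
  rw [Finset.sum_congr rfl e6, ← Finset.sum_smul]
  congr 1
  -- Vandermonde
  have e7 : ∑ m ∈ Finset.Icc (n-k) k',
      gbinom k (k+m-n).toNat * ((-1:ℚ)^k' * gbinom k' (k'-m).toNat)
      = ∑ s ∈ Finset.range ((k+k'-n).toNat + 1),
          gbinom k s * ((-1:ℚ)^k' * gbinom k' ((k+k'-n).toNat - s)) := by
    refine Finset.sum_nbij' (fun m => (m - (n-k)).toNat) (fun s => n - k + s) ?_ ?_ ?_ ?_ ?_
    · intro m hm; rw [Finset.mem_Icc] at hm; rw [Finset.mem_range]; omega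
    · intro s hs; rw [Finset.mem_range] at hs; rw [Finset.mem_Icc]; omega
    · intro m hm; rw [Finset.mem_Icc] at hm; omega
    · intro s hs; rw [Finset.mem_range] at hs; omega
    · intro m hm
      rw [Finset.mem_Icc] at hm
      have h8 : (k+m-n).toNat = (m - (n-k)).toNat := by omega
      have h9 : (k'-m).toNat = (k+k'-n).toNat - (m - (n-k)).toNat := by omega
      rw [h8, h9]
  rw [e7]
  have e8 : ∀ s ∈ Finset.range ((k+k'-n).toNat + 1),
      gbinom k s * ((-1:ℚ)^k' * gbinom k' ((k+k'-n).toNat - s))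
      = (-1:ℚ)^k' * (gbinom k s * gbinom k' ((k+k'-n).toNat - s)) := by
    intro s _; ring
  rw [Finset.sum_congr rfl e8, ← Finset.mul_sum, gbinom_vandermonde]

end Rside

end FLaux


lemma key_identity {R : Type} [CommRing R] [Algebra ℚ R] {d : R →+ R}
    (hd : Leibniz d) (h : Rˣ) (hdh : d (h : R) = 0) (P Q : PDO R d) (N : ℤ)
    (hP : ∀ n, N < n → P.coeff n = 0) (hQ : ∀ n, N < n → Q.coeff n = 0) (t : ℕ) :
    (∑ j ∈ Finset.range (t + 1), ∑ᶠ i : ℤ,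
        (((-1 : ℚ) ^ (-1 - i) * ((Nat.factorial j : ℚ))⁻¹ * ((Nat.factorial (t - j) : ℚ))⁻¹)
          • (P.coeff i * (d^[t - j] (Q.coeff (-1 - i - (j : ℤ)))) * ((h⁻¹ ^ j : Rˣ) : R))))
      = ((-1 : ℚ) ^ t * ((Nat.factorial t : ℚ))⁻¹)
          • ((PDO.ofSymbol h P * PDO.adj (PDO.ofSymbol h Q)).coeff (-1 - (t:ℤ)) * (h : R)) := by
  set n : ℤ := -1 - (t:ℤ) with hn
  rw [prod_coeff hd h hdh P Q N hP hQ n, Finset.sum_mul, Finset.smul_sum]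
  have eL : ∀ j ∈ Finset.range (t+1),
      (∑ᶠ i : ℤ,
        (((-1 : ℚ) ^ (-1 - i) * ((Nat.factorial j : ℚ))⁻¹ * ((Nat.factorial (t - j) : ℚ))⁻¹)
          • (P.coeff i * (d^[t - j] (Q.coeff (-1 - i - (j : ℤ)))) * ((h⁻¹ ^ j : Rˣ) : R))))
      = ∑ i ∈ Finset.Icc (n - N) N,
        (((-1 : ℚ) ^ (-1 - i) * ((Nat.factorial j : ℚ))⁻¹ * ((Nat.factorial (t - j) : ℚ))⁻¹)
          • (P.coeff i * (d^[t - j] (Q.coeff (-1 - i - (j : ℤ)))) * ((h⁻¹ ^ j : Rˣ) : R))) := by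
    intro j hj
    rw [Finset.mem_range] at hj
    apply finsum_eq_finset_sum_of_support_subset
    intro i hi
    simp only [Function.mem_support] at hi
    rw [Finset.coe_Icc, Set.mem_Icc]
    constructor
    · by_contra hc
      push_neg at hc
      apply hi
      rw [hQ (-1 - i - (j:ℤ)) (by omega), PDO.iterD_zero, mul_zero, zero_mul, smul_zero]
    · by_contra hc
      push_neg at hc
      apply hi
      rw [hP i (by omega), zero_mul, zero_mul, smul_zero]
  rw [Finset.sum_congr rfl eL, Finset.sum_comm]
  refine Finset.sum_congr rfl fun i hi => ?_
  rw [Finset.mem_Icc] at hi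
  rw [Finset.sum_mul, Finset.smul_sum]
  have hsub1 : Finset.Icc (n - i) N ⊆ Finset.Icc (n - i) (max N (-1 - i)) := by
    intro x hx
    rw [Finset.mem_Icc] at hx ⊢
    constructor
    · exact hx.1
    · exact le_trans hx.2 (le_max_left _ _)
  rw [Finset.sum_subset hsub1 (by
    intro k' hk' hk'2
    rw [Finset.mem_Icc] at hk'
    have hkN : N < k' := by
      by_contra hc
      push_neg at hc
      exact hk'2 (Finset.mem_Icc.mpr ⟨hk'.1, hc⟩)
    rw [hQ k' hkN, PDO.iterD_zero, zero_mul, mul_zero, smul_zero, zero_mul, smul_zero])]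
  have hsub2 : Finset.Icc (n - i) (-1 - i) ⊆ Finset.Icc (n - i) (max N (-1 - i)) := by
    intro x hx
    rw [Finset.mem_Icc] at hx ⊢
    exact ⟨hx.1, le_trans hx.2 (le_max_right _ _)⟩
  rw [← Finset.sum_subset hsub2 (by
    intro k' hk' hk'2
    rw [Finset.mem_Icc] at hk'
    have hkT : -1 - i < k' := by
      by_contra hc
      push_neg at hc
      exact hk'2 (Finset.mem_Icc.mpr ⟨hk'.1, hc⟩)
    have hg : gbinom (i + k') (i + k' - n).toNat = 0 :=
      gbinom_eq_zero_of _ _ (by omega) (by omega)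
    rw [hg, mul_zero, zero_smul, zero_mul, smul_zero])]
  refine Finset.sum_nbij' (fun j => -1 - i - (j:ℤ)) (fun k' => (-1 - i - k').toNat)
    ?_ ?_ ?_ ?_ ?_
  · intro j hj
    rw [Finset.mem_range] at hj
    rw [Finset.mem_Icc]
    omega
  · intro k' hk'
    rw [Finset.mem_Icc] at hk'
    rw [Finset.mem_range]
    omega
  · intro j hj
    rw [Finset.mem_range] at hj
    omega
  · intro k' hk'
    rw [Finset.mem_Icc] at hk'
    omega
  · intro j hj
    rw [Finset.mem_range] at hj
    have hjt : j ≤ t := by omega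
    have hrn : (i + (-1 - i - (j:ℤ)) - n).toNat = t - j := by omega
    have hKi : i + (-1 - i - (j:ℤ)) = -1 - (j:ℤ) := by ring
    rw [smul_mul_assoc, smul_smul, hrn, hKi]
    have hsc : ((-1:ℚ) ^ t * ((Nat.factorial t : ℚ))⁻¹)
          * ((-1:ℚ) ^ (-1 - i - (j:ℤ)) * gbinom (-1 - (j:ℤ)) (t - j))
        = (-1:ℚ) ^ (-1 - i) * ((Nat.factorial j : ℚ))⁻¹ * ((Nat.factorial (t - j) : ℚ))⁻¹ := by
      rw [gbinom_neg j (t - j), show j + (t - j) = t by omega]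
      have hz1 : ((-1:ℚ)) ^ ((-1 : ℤ) - i - (j:ℤ))
          = (-1:ℚ) ^ ((-1:ℤ) - i) * ((-1:ℚ)^j)⁻¹ := by
        rw [show (-1:ℤ) - i - (j:ℤ) = ((-1:ℤ) - i) + (-(j:ℤ)) by ring,
          zpow_add₀ (by norm_num : (-1:ℚ) ≠ 0), zpow_neg, zpow_natCast]
      have h4 : ((-1:ℚ)^j)⁻¹ = (-1:ℚ)^j := by
        rw [← inv_pow]; norm_num
      rw [hz1, h4]
      have hfact : ((t.choose (t-j) : ℕ) : ℚ) * ((t-j).factorial : ℚ) * (j.factorial : ℚ)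
          = (t.factorial : ℚ) := by
        have h5 := Nat.choose_mul_factorial_mul_factorial (show t - j ≤ t by omega)
        have h6 : t - (t - j) = j := by omega
        rw [h6] at h5
        exact_mod_cast h5
      have hf1 : ((t.factorial : ℕ) : ℚ) ≠ 0 := by
        exact_mod_cast Nat.factorial_ne_zero t
      have hf2 : ((j.factorial : ℕ) : ℚ) ≠ 0 := by
        exact_mod_cast Nat.factorial_ne_zero j
      have hf3 : (((t-j).factorial : ℕ) : ℚ) ≠ 0 := by
        exact_mod_cast Nat.factorial_ne_zero (t-j)
      have hC : ((t.choose (t-j) : ℕ) : ℚ)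
          = (t.factorial : ℚ) * (((t-j).factorial : ℚ))⁻¹ * ((j.factorial : ℚ))⁻¹ := by
        rw [Nat.choose_symm hjt] at hfact ⊢
        field_simp
        linear_combination hfact
      have hpt2 : (-1:ℚ)^j * (-1:ℚ)^(t-j) = (-1:ℚ)^t := by
        rw [← pow_add]
        congr 1
        omega
      have hs2 : (-1:ℚ)^t * (-1:ℚ)^j * (-1:ℚ)^(t-j) = 1 := by
        rw [mul_assoc, hpt2, ← mul_pow]
        norm_num
      have ht2 : (t.factorial : ℚ) * ((t.factorial : ℚ))⁻¹ = 1 := mul_inv_cancel₀ hf1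
      rw [hC]
      linear_combination ((-1:ℚ) ^ ((-1:ℤ) - i) * (((t-j).factorial : ℚ))⁻¹
          * ((j.factorial : ℚ))⁻¹ * (t.factorial : ℚ) * ((t.factorial : ℚ))⁻¹) * hs2
        + ((-1:ℚ) ^ ((-1:ℤ) - i) * (((t-j).factorial : ℚ))⁻¹ * ((j.factorial : ℚ))⁻¹) * ht2
    rw [hsc]
    congr 1
    have hU : ((h ^ i : Rˣ) : R) * ((h ^ (-1 - i - (j:ℤ)) : Rˣ) : R) * ((h : Rˣ) : R)
        = ((h⁻¹ ^ j : Rˣ) : R) := by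
      rw [← Units.val_mul, ← Units.val_mul]
      congr 1
      have e1 : h ^ i * h ^ (-1 - i - (j:ℤ)) = h ^ ((-1 : ℤ) - (j:ℤ)) := by
        rw [show (-1 : ℤ) - (j:ℤ) = i + (-1 - i - (j:ℤ)) by ring, zpow_add]
      rw [e1]
      have e2 : h ^ ((-1 : ℤ) - (j:ℤ)) * h = h ^ (-(j:ℤ)) := by
        rw [show -(j:ℤ) = ((-1 : ℤ) - (j:ℤ)) + 1 by ring, zpow_add_one]
      rw [e2, zpow_neg, zpow_natCast, ← inv_pow]
    rw [← hU]
    ring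

/-- **Fundamental Lemma.**  For symbols `P(λ) = Σ pₙλⁿ`, `Q(λ) = Σ qₙλⁿ`, the bilinear
residue equation `Res_λ (P(λ) · Q^y(−λ) · e^(−yλ/h)) dλ = 0`, holding identically in `R[[y]]`
(i.e. each coefficient of a power `yᵗ` vanishes), is equivalent to the pseudo-differential
operator equation `(P(h∂) · Q(h∂)*)₋ = 0`. -/
theorem fundamental_lemma
    (R : Type) [CommRing R] [Algebra ℚ R] (d : R →+ R)
    (hd : Leibniz d) (h : Rˣ) (hdh : d (h : R) = 0)
    (P Q : PDO R d) :
    (∀ t : ℕ, ∑ j ∈ Finset.range (t + 1), ∑ᶠ i : ℤ,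
        (((-1 : ℚ) ^ (-1 - i) * ((Nat.factorial j : ℚ))⁻¹ * ((Nat.factorial (t - j) : ℚ))⁻¹)
          • (P.coeff i * (d^[t - j] (Q.coeff (-1 - i - (j : ℤ)))) * ((h⁻¹ ^ j : Rˣ) : R))) = 0)
      ↔ PDO.negp (PDO.ofSymbol h P * PDO.adj (PDO.ofSymbol h Q)) = 0 := by
  obtain ⟨NP, hNP⟩ := P.bdd
  obtain ⟨NQ, hNQ⟩ := Q.bdd
  set N : ℤ := max NP NQ with hNdef
  have hP : ∀ n, N < n → P.coeff n = 0 := fun n hn =>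
    hNP n (lt_of_le_of_lt (le_max_left _ _) hn)
  have hQ : ∀ n, N < n → Q.coeff n = 0 := fun n hn =>
    hNQ n (lt_of_le_of_lt (le_max_right _ _) hn)
  have K := key_identity hd h hdh P Q N hP hQ
  set c : PDO R d := PDO.ofSymbol h P * PDO.adj (PDO.ofSymbol h Q) with hc
  have hCne : ∀ t : ℕ, ((-1 : ℚ) ^ t * ((Nat.factorial t : ℚ))⁻¹) ≠ 0 := by
    intro t
    apply mul_ne_zero
    · exact pow_ne_zero t (by norm_num)
    · exact inv_ne_zero (by exact_mod_cast Nat.factorial_ne_zero t)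
  constructor
  · intro H
    apply PDO.ext'
    funext m
    show (if m < 0 then c.coeff m else 0) = 0
    by_cases hm : m < 0
    · rw [if_pos hm]
      set t : ℕ := (-1 - m).toNat with ht
      have hm' : m = -1 - (t : ℤ) := by omega
      have h0 := H t
      rw [K t] at h0
      have h1 : c.coeff (-1 - (t:ℤ)) * (h : R) = 0 := by
        have h2 := congrArg (fun z => (((-1 : ℚ) ^ t * ((Nat.factorial t : ℚ))⁻¹))⁻¹ • z) h0
        simp only [smul_smul, inv_mul_cancel₀ (hCne t), one_smul, smul_zero] at h2
        exact h2
      have h3 := congrArg (fun z => z * ((h⁻¹ : Rˣ) : R)) h1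
      simp only [zero_mul, mul_assoc, ← Units.val_mul, mul_inv_cancel,
        Units.val_one, mul_one] at h3
      rw [hm']
      exact h3
    · rw [if_neg hm]
  · intro H t
    have h4 : c.coeff (-1 - (t:ℤ)) = 0 := by
      have h5 := congrArg (fun A : PDO R d => A.coeff (-1 - (t:ℤ))) H
      have h6 : (PDO.negp c).coeff (-1 - (t:ℤ)) = c.coeff (-1 - (t:ℤ)) := by
        show (if (-1 - (t:ℤ)) < 0 then c.coeff (-1 - (t:ℤ)) else 0) = _
        rw [if_pos (by omega)]
      rw [← h6]
      exact h5
    rw [K t, h4, zero_mul, smul_zero]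
end

section
/- For every u ∈ R and L = h²∂² + 2u ∈ Ψ(R) there exists a unique pseudo-differential operator M ∈ Ψ(R) such that M − h∂ has order ≤ 0 (i.e. contains only powers ∂ⁿ with n ≤ 0) and M² = L. Moreover the coefficient of ∂⁰ in M is 0, the coefficient of ∂⁻¹ is u/h, and the coefficient of ∂⁻² is −(∂u)/(2h). -/
open scoped BigOperators

namespace SqrtAux
set_option linter.unusedSectionVars false

lemma gbinom_zero (k : ℤ) : gbinom k 0 = 1 := by simp [gbinom]

lemma gbinom_one_one : gbinom 1 1 = 1 := by simp [gbinom]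

lemma gbinom_one_eq_zero {l : ℕ} (hl : 2 ≤ l) : gbinom 1 l = 0 := by
  unfold gbinom
  rw [Finset.prod_eq_zero (i := 1) (Finset.mem_range.mpr (by omega)) (by norm_num)]
  simp

variable {R : Type} [CommRing R] [Algebra ℚ R] {d : R →+ R}

lemma iterD_dzero {x : R} (hx : d x = 0) {l : ℕ} (hl : 1 ≤ l) : d^[l] x = 0 := by
  cases l with
  | zero => omega
  | succ l =>
    rw [Function.iterate_succ_apply, hx]
    induction l with
    | zero => rfl
    | succ l ih => rw [Function.iterate_succ_apply', ih (by omega), map_zero]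

lemma half_smul_double (x : R) : (2⁻¹ : ℚ) • (x + x) = x := by
  rw [← two_smul ℚ x, smul_smul]; norm_num

lemma two_mul_half_smul (y : R) : 2 * ((2⁻¹ : ℚ) • y) = y := by
  rw [two_mul, ← smul_add]; exact half_smul_double y

lemma solve_eq (h : Rˣ) (x c v : R) :
    2 * ((h : R) * x) + c = v ↔ x = (2⁻¹ : ℚ) • (((h⁻¹ : Rˣ) : R) * (v - c)) := by
  constructor
  · intro he
    have h2 : v - c = 2 * ((h : R) * x) := by rw [← he]; ring
    rw [h2, show ((h⁻¹ : Rˣ) : R) * (2 * ((h : R) * x)) =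
      (((h⁻¹ : Rˣ) : R) * (h : R)) * x + (((h⁻¹ : Rˣ) : R) * (h : R)) * x by ring,
      Units.inv_mul, one_mul, half_smul_double]
  · intro he
    rw [he, mul_smul_comm, two_mul_half_smul, ← mul_assoc, Units.mul_inv, one_mul,
      sub_add_cancel]

lemma d_one (hd : ∀ a b : R, d (a * b) = a * d b + b * d a) : d (1 : R) = 0 := by
  have h1 := hd 1 1
  simp only [mul_one, one_mul] at h1
  have : d (1:R) + 0 = d 1 + d 1 := by rw [add_zero]; exact h1
  exact (add_left_cancel this).symm

lemma d_inv (hd : ∀ a b : R, d (a * b) = a * d b + b * d a) (h : Rˣ)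
    (hdh : d (h : R) = 0) : d ((h⁻¹ : Rˣ) : R) = 0 := by
  have h1 : ((h : R) * ((h⁻¹ : Rˣ) : R)) = 1 := Units.mul_inv h
  have h2 := hd (h : R) ((h⁻¹ : Rˣ) : R)
  rw [h1, d_one hd, hdh, mul_zero, add_zero] at h2
  have h3 := congrArg (fun x => ((h⁻¹ : Rˣ) : R) * x) h2
  simpa [← mul_assoc, Units.inv_mul] using h3.symm

end SqrtAux
namespace SqrtAux
set_option linter.unusedSectionVars false
set_option maxHeartbeats 1000000

open PDO

variable {R : Type} [CommRing R] [Algebra ℚ R] {d : R →+ R}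

/-- term of the product -/
def trm (d : R →+ R) (a b : ℤ → R) (k m n : ℤ) : R :=
  a k * (gbinom k (k + m - n).toNat • (d^[(k + m - n).toNat] (b m)))

lemma mul_coeff (A B : PDO R d) (NA NB : ℤ) (hA : ∀ k, NA < k → A.coeff k = 0)
    (hB : ∀ m, NB < m → B.coeff m = 0) (n : ℤ) :
    (A * B).coeff n = ∑ k ∈ Finset.Icc (n - NB) NA, ∑ m ∈ Finset.Icc (n - k) NB,
      trm d A.coeff B.coeff k m n := by
  have hinner : ∀ k : ℤ, (∑ᶠ m : ℤ, if _ : 0 ≤ k + m - n then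
      A.coeff k * (gbinom k (k + m - n).toNat • (d^[(k + m - n).toNat] (B.coeff m)))
      else 0) = ∑ m ∈ Finset.Icc (n - k) NB, trm d A.coeff B.coeff k m n := by
    intro k
    rw [finsum_eq_finset_sum_of_support_subset]
    · refine Finset.sum_congr rfl (fun m hm => ?_)
      rw [Finset.mem_Icc] at hm
      rw [dif_pos (by omega)]
      rfl
    · intro m hm
      simp only [Function.mem_support] at hm
      simp only [Finset.coe_Icc, Set.mem_Icc]
      by_contra hc
      push_neg at hc
      apply hm
      by_cases h0 : 0 ≤ k + m - n
      · rw [dif_pos h0]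
        have hm2 : NB < m := hc (by omega)
        rw [hB m hm2, iterD_zero, smul_zero, mul_zero]
      · rw [dif_neg h0]
  show (∑ᶠ (k : ℤ) (m : ℤ), if _ : 0 ≤ k + m - n then
      A.coeff k * (gbinom k (k + m - n).toNat • (d^[(k + m - n).toNat] (B.coeff m)))
      else 0) = _
  rw [finsum_congr hinner]
  rw [finsum_eq_finset_sum_of_support_subset]
  intro k hk
  simp only [Function.mem_support] at hk
  simp only [Finset.coe_Icc, Set.mem_Icc]
  by_contra hc
  push_neg at hc
  apply hk
  by_cases hka : NA < k
  · exact Finset.sum_eq_zero (fun m _ => by rw [trm, hA k hka, zero_mul])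
  · have : NB < n - k := by omega
    rw [Finset.Icc_eq_empty (by omega), Finset.sum_empty]

end SqrtAux
namespace SqrtAux
set_option linter.unusedSectionVars false
set_option maxHeartbeats 1000000

open PDO

variable {R : Type} [CommRing R] [Algebra ℚ R] {d : R →+ R}

noncomputable def S0 (d : R →+ R) (a : ℤ → R) (n : ℤ) : R :=
  ∑ k ∈ Finset.Icc n 0, ∑ m ∈ Finset.Icc (n - k) 0, trm d a a k m n

def Lc (h : Rˣ) (u : R) (n : ℤ) : R :=
  if n = 2 then (h : R) ^ 2 else if n = 0 then 2 * u else 0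

lemma Lop_coeff (h : Rˣ) (u : R) (n : ℤ) : (Lop h u : PDO R d).coeff n = Lc h u n := rfl

noncomputable def nextc (d : R →+ R) (h : Rˣ) (u : R) (a : ℤ → R) (n : ℤ) : R :=
  (2⁻¹ : ℚ) • (((h⁻¹ : Rˣ) : R) * (Lc h u n - ((h : R) * d (a n) + S0 d a n)))

lemma decomp (h : Rˣ) (hdh : d (h : R) = 0) (a : ℤ → R) (ha1 : a 1 = (h : R))
    {n : ℤ} (hn : n ≤ 1) :
    ∑ k ∈ Finset.Icc (n - 1) 1, ∑ m ∈ Finset.Icc (n - k) 1, trm d a a k m n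
      = 2 * ((h : R) * a (n - 1)) + (h : R) * d (a n) + S0 d a n := by
  have e1 : Finset.Icc (n - 1) 1 = insert (n - 1) (insert 1 (Finset.Icc n 0)) := by
    ext x; simp only [Finset.mem_Icc, Finset.mem_insert]; omega
  rw [e1, Finset.sum_insert (by simp only [Finset.mem_insert, Finset.mem_Icc]; omega),
    Finset.sum_insert (by simp only [Finset.mem_Icc]; omega)]
  have eA : ∑ m ∈ Finset.Icc (n - (n - 1)) 1, trm d a a (n - 1) m n = a (n - 1) * (h : R) := by
    rw [show n - (n - 1) = (1 : ℤ) by ring, Finset.Icc_self, Finset.sum_singleton, trm,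
      show n - 1 + 1 - n = (0 : ℤ) by ring]
    simp [gbinom_zero, ha1]
  have eB : ∑ m ∈ Finset.Icc (n - 1) 1, trm d a a 1 m n
      = (h : R) * a (n - 1) + (h : R) * d (a n) := by
    have e2 : Finset.Icc (n - 1) 1 = insert (n - 1) (insert n (Finset.Icc (n + 1) 1)) := by
      ext x; simp only [Finset.mem_Icc, Finset.mem_insert]; omega
    rw [e2, Finset.sum_insert (by simp only [Finset.mem_insert, Finset.mem_Icc]; omega),
      Finset.sum_insert (by simp only [Finset.mem_Icc]; omega)]
    have t1 : trm d a a 1 (n - 1) n = (h : R) * a (n - 1) := by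
      rw [trm, show 1 + (n - 1) - n = (0 : ℤ) by ring]
      simp [gbinom_zero, ha1]
    have t2 : trm d a a 1 n n = (h : R) * d (a n) := by
      rw [trm, show 1 + n - n = (1 : ℤ) by ring]
      simp [gbinom_one_one, ha1]
    have t3 : ∑ m ∈ Finset.Icc (n + 1) 1, trm d a a 1 m n = 0 := by
      refine Finset.sum_eq_zero (fun m hm => ?_)
      rw [Finset.mem_Icc] at hm
      rw [trm, gbinom_one_eq_zero (l := (1 + m - n).toNat) (by omega), zero_smul, mul_zero]
    rw [t1, t2, t3, add_zero]
  have eC : ∀ k ∈ Finset.Icc n 0, ∑ m ∈ Finset.Icc (n - k) 1, trm d a a k m n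
      = ∑ m ∈ Finset.Icc (n - k) 0, trm d a a k m n := by
    intro k hk
    rw [Finset.mem_Icc] at hk
    have e3 : Finset.Icc (n - k) 1 = insert 1 (Finset.Icc (n - k) 0) := by
      ext x; simp only [Finset.mem_Icc, Finset.mem_insert]; omega
    rw [e3, Finset.sum_insert (by simp only [Finset.mem_Icc]; omega)]
    have t4 : trm d a a k 1 n = 0 := by
      rw [trm, ha1, iterD_dzero hdh (by omega), smul_zero, mul_zero]
    rw [t4, zero_add]
  rw [eA, eB, Finset.sum_congr rfl eC]
  show _ = _ + _ + S0 d a n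
  rw [S0]; ring

lemma sq_coeff (h : Rˣ) (hdh : d (h : R) = 0) (M : PDO R d) (h1 : M.coeff 1 = (h : R))
    (htop : ∀ k : ℤ, 1 < k → M.coeff k = 0) {n : ℤ} (hn : n ≤ 1) :
    (M * M).coeff n = 2 * ((h : R) * M.coeff (n - 1)) + (h : R) * d (M.coeff n)
      + S0 d M.coeff n := by
  rw [mul_coeff M M 1 1 htop htop n]
  exact decomp h hdh M.coeff h1 hn

lemma sq_coeff_two (h : Rˣ) (M : PDO R d) (h1 : M.coeff 1 = (h : R))
    (htop : ∀ k : ℤ, 1 < k → M.coeff k = 0) :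
    (M * M).coeff 2 = (h : R) ^ 2 := by
  rw [mul_coeff M M 1 1 htop htop 2, show (2 : ℤ) - 1 = 1 by norm_num, Finset.Icc_self,
    Finset.sum_singleton, show (2 : ℤ) - 1 = 1 by norm_num, Finset.Icc_self,
    Finset.sum_singleton, trm, show (1 : ℤ) + 1 - 2 = 0 by norm_num]
  simp [gbinom_zero, h1, sq]

lemma sq_coeff_high (h : Rˣ) (M : PDO R d) (h1 : M.coeff 1 = (h : R))
    (htop : ∀ k : ℤ, 1 < k → M.coeff k = 0) {n : ℤ} (hn : 3 ≤ n) :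
    (M * M).coeff n = 0 := by
  rw [mul_coeff M M 1 1 htop htop n, Finset.Icc_eq_empty (by omega), Finset.sum_empty]

lemma key (h : Rˣ) (u : R) (hdh : d (h : R) = 0) (M : PDO R d)
    (h1 : M.coeff 1 = (h : R)) (htop : ∀ k : ℤ, 1 < k → M.coeff k = 0) :
    M * M = Lop h u ↔ ∀ n : ℤ, n ≤ 1 → M.coeff (n - 1) = nextc d h u M.coeff n := by
  constructor
  · intro hML n hn
    have hc : (M * M).coeff n = (Lop h u : PDO R d).coeff n := by rw [hML]
    rw [sq_coeff h hdh M h1 htop hn, Lop_coeff, add_assoc] at hc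
    exact (solve_eq h _ _ _).mp hc
  · intro hrec
    apply PDO.ext'
    funext n
    show (M * M).coeff n = (Lop h u : PDO R d).coeff n
    rw [Lop_coeff]
    rcases le_or_gt n 1 with hn | hn
    · rw [sq_coeff h hdh M h1 htop hn, add_assoc]
      exact (solve_eq h _ _ _).mpr (hrec n hn)
    · rcases eq_or_lt_of_le (show (2 : ℤ) ≤ n by omega) with h2 | h2
      · rw [← h2, sq_coeff_two h M h1 htop, Lc, if_pos rfl]
      · rw [sq_coeff_high h M h1 htop (by omega), Lc, if_neg (by omega), if_neg (by omega)]

end SqrtAux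
namespace SqrtAux
set_option linter.unusedSectionVars false
set_option maxHeartbeats 1000000

open PDO

variable {R : Type} [CommRing R] [Algebra ℚ R] {d : R →+ R}

noncomputable def trunc (d : R →+ R) (h : Rˣ) (u : R) : ℕ → ℤ → R
  | 0 => fun n => if n = 1 then (h : R) else 0
  | (j + 1) => fun n =>
      if n = -(j : ℤ) then nextc d h u (trunc d h u j) (1 - j) else trunc d h u j n

noncomputable def acoef (d : R →+ R) (h : Rˣ) (u : R) (n : ℤ) : R :=
  trunc d h u (1 - n).toNat n

lemma trunc_stable (h : Rˣ) (u : R) (i j : ℕ) (hij : j ≤ i) (n : ℤ)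
    (hn : 1 - (j : ℤ) ≤ n) : trunc d h u i n = trunc d h u j n := by
  induction i with
  | zero => have : j = 0 := by omega
            rw [this]
  | succ i ih =>
    by_cases hji : j = i + 1
    · rw [hji]
    · have hji' : j ≤ i := by omega
      show (if n = -(i : ℤ) then _ else trunc d h u i n) = _
      rw [if_neg (by omega), ih hji']

lemma acoef_eq (h : Rˣ) (u : R) (j : ℕ) (n : ℤ) (hn : 1 - (j : ℤ) ≤ n) :
    acoef d h u n = trunc d h u j n := by
  have h1 : 1 - (((1 - n).toNat : ℕ) : ℤ) ≤ n := by omega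
  calc acoef d h u n = trunc d h u (max j (1 - n).toNat) n :=
        (trunc_stable h u _ _ (le_max_right _ _) n h1).symm
    _ = trunc d h u j n := trunc_stable h u _ _ (le_max_left _ _) n hn

lemma S0_congr {a b : ℤ → R} (n : ℤ) (hab : ∀ m, n ≤ m → m ≤ 1 → a m = b m) :
    S0 d a n = S0 d b n := by
  unfold S0
  refine Finset.sum_congr rfl (fun k hk => ?_)
  rw [Finset.mem_Icc] at hk
  refine Finset.sum_congr rfl (fun m hm => ?_)
  rw [Finset.mem_Icc] at hm
  unfold trm
  rw [hab k hk.1 (by omega), hab m (by omega) (by omega)]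

lemma nextc_congr (h : Rˣ) (u : R) {a b : ℤ → R} (n : ℤ) (hn : n ≤ 1)
    (hab : ∀ m, n ≤ m → m ≤ 1 → a m = b m) : nextc d h u a n = nextc d h u b n := by
  unfold nextc
  rw [hab n le_rfl hn, S0_congr n hab]

lemma acoef_rec (h : Rˣ) (u : R) (j : ℕ) :
    acoef d h u (-(j : ℤ)) = nextc d h u (acoef d h u) (1 - j) := by
  rw [acoef_eq h u (j + 1) _ (by omega)]
  show (if (-(j : ℤ)) = -(j : ℤ) then nextc d h u (trunc d h u j) (1 - j) else _) = _
  rw [if_pos rfl]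
  exact nextc_congr h u _ (by omega) (fun m hm1 hm2 => (acoef_eq h u j m (by omega)).symm)

lemma acoef_one (h : Rˣ) (u : R) : acoef d h u 1 = (h : R) := by
  unfold acoef
  rw [show ((1:ℤ) - 1).toNat = 0 from rfl]
  show (if (1:ℤ) = 1 then (h : R) else 0) = (h : R)
  rw [if_pos rfl]

lemma acoef_top (h : Rˣ) (u : R) (k : ℤ) (hk : 1 < k) : acoef d h u k = 0 := by
  show trunc d h u (1 - k).toNat k = 0
  rw [show (1 - k).toNat = 0 by omega]
  show (if k = 1 then (h : R) else 0) = 0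
  rw [if_neg (by omega)]

lemma acoef_rec' (h : Rˣ) (u : R) (n : ℤ) (hn : n ≤ 1) :
    acoef d h u (n - 1) = nextc d h u (acoef d h u) n := by
  have h1 := acoef_rec h u (d := d) ((1 - n).toNat)
  rw [show (-(((1 - n).toNat : ℕ) : ℤ)) = n - 1 by omega,
    show (1 : ℤ) - (((1 - n).toNat : ℕ) : ℤ) = n by omega] at h1
  exact h1

end SqrtAux
namespace SqrtAux
set_option linter.unusedSectionVars false
set_option maxHeartbeats 1000000

open PDO

variable {R : Type} [CommRing R] [Algebra ℚ R] {d : R →+ R}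

lemma coeff_unique (h : Rˣ) (u : R) (M M' : PDO R d)
    (hM1 : M.coeff 1 = (h : R)) (hMt : ∀ k : ℤ, 1 < k → M.coeff k = 0)
    (hM'1 : M'.coeff 1 = (h : R)) (hM't : ∀ k : ℤ, 1 < k → M'.coeff k = 0)
    (hMr : ∀ n : ℤ, n ≤ 1 → M.coeff (n - 1) = nextc d h u M.coeff n)
    (hM'r : ∀ n : ℤ, n ≤ 1 → M'.coeff (n - 1) = nextc d h u M'.coeff n) :
    M = M' := by
  have key2 : ∀ j : ℕ, M.coeff (1 - (j : ℤ)) = M'.coeff (1 - (j : ℤ)) := by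
    intro j
    induction j using Nat.strong_induction_on with
    | _ j ih =>
      match j with
      | 0 => simpa using hM1.trans hM'1.symm
      | (j + 1) =>
        have e1 : (1 : ℤ) - ((j + 1 : ℕ) : ℤ) = (1 - (j : ℤ)) - 1 := by push_cast; ring
        rw [e1, hMr _ (by omega), hM'r _ (by omega)]
        refine nextc_congr h u _ (by omega) (fun m hm1 hm2 => ?_)
        have e2 : m = 1 - (((1 - m).toNat : ℕ) : ℤ) := by omega
        rw [e2]
        exact ih (1 - m).toNat (by omega)
  apply PDO.ext'
  funext n
  rcases le_or_gt n 1 with hn | hn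
  · have h3 := key2 (1 - n).toNat
    rwa [show (1 : ℤ) - (((1 - n).toNat : ℕ) : ℤ) = n by omega] at h3
  · rw [hMt n hn, hM't n hn]

lemma coeffs (h : Rˣ) (u : R) (hd : ∀ a b : R, d (a * b) = a * d b + b * d a)
    (hdh : d (h : R) = 0) (a : ℤ → R) (ha1 : a 1 = (h : R))
    (hrec : ∀ n : ℤ, n ≤ 1 → a (n - 1) = nextc d h u a n) :
    a 0 = 0 ∧ a (-1) = u * ((h⁻¹ : Rˣ) : R) ∧
      a (-2) = -((2 : ℚ)⁻¹ • (d u * ((h⁻¹ : Rˣ) : R))) := by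
  have h0 : a 0 = 0 := by
    have e := hrec 1 le_rfl
    rw [show (1 : ℤ) - 1 = 0 by norm_num] at e
    have hS : S0 d a 1 = 0 := by
      unfold S0
      rw [Finset.Icc_eq_empty (by norm_num), Finset.sum_empty]
    rw [nextc, hS, ha1, hdh] at e
    simpa [Lc] using e
  have h1 : a (-1) = u * ((h⁻¹ : Rˣ) : R) := by
    have e := hrec 0 (by norm_num)
    rw [show (0 : ℤ) - 1 = -1 by norm_num] at e
    have hS : S0 d a 0 = 0 := by
      unfold S0
      rw [Finset.Icc_self, Finset.sum_singleton, show (0 : ℤ) - 0 = 0 by norm_num,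
        Finset.Icc_self, Finset.sum_singleton, trm, h0, zero_mul]
    rw [nextc, hS, h0, map_zero, mul_zero, zero_add, sub_zero,
      show Lc h u 0 = 2 * u by simp [Lc]] at e
    rw [e, show ((h⁻¹ : Rˣ) : R) * (2 * u) = u * ((h⁻¹ : Rˣ) : R) + u * ((h⁻¹ : Rˣ) : R)
      by ring, half_smul_double]
  refine ⟨h0, h1, ?_⟩
  have e := hrec (-1) (by norm_num)
  rw [show (-1 : ℤ) - 1 = -2 by norm_num] at e
  have hS : S0 d a (-1) = 0 := by
    unfold S0
    rw [show Finset.Icc (-1 : ℤ) 0 = {-1, 0} by ext x; simp [Finset.mem_Icc]; omega]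
    rw [Finset.sum_insert (by simp), Finset.sum_singleton]
    have t1 : ∑ m ∈ Finset.Icc (-1 - (-1) : ℤ) 0, trm d a a (-1) m (-1) = 0 := by
      rw [show (-1 : ℤ) - (-1) = 0 by norm_num, Finset.Icc_self, Finset.sum_singleton,
        trm, show (-1 : ℤ) + 0 - (-1) = 0 by norm_num]
      simp [gbinom_zero, h0]
    have t2 : ∑ m ∈ Finset.Icc ((-1 : ℤ) - 0) 0, trm d a a 0 m (-1) = 0 := by
      refine Finset.sum_eq_zero (fun m _ => ?_)
      rw [trm, h0, zero_mul]
    rw [t1, t2, add_zero]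
  have hda : d (a (-1)) = ((h⁻¹ : Rˣ) : R) * d u := by
    rw [h1, hd u _, d_inv hd h hdh, mul_zero, zero_add]
  rw [nextc, hS, hda, add_zero, ← mul_assoc, Units.mul_inv, one_mul,
    show Lc h u (-1) = 0 by simp [Lc], zero_sub, mul_neg, smul_neg, mul_comm] at e
  exact e

end SqrtAux
/-- For `L = h²∂² + 2u` there is a unique pseudo-differential operator `M` with
`M − h∂` of order `≤ 0` and `M² = L`; moreover its coefficients of `∂⁰`, `∂⁻¹`, `∂⁻²`
are `0`, `u/h` and `−(∂u)/(2h)` respectively. -/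
theorem square_root_of_Lax_operator
    (R : Type) [CommRing R] [Algebra ℚ R] (d : R →+ R)
    (hd : Leibniz d) (h : Rˣ) (hdh : d (h : R) = 0)
    (u : R) :
    (∃! M : PDO R d,
      (M.coeff 1 = (h : R) ∧ ∀ k : ℤ, 1 < k → M.coeff k = 0) ∧ M * M = PDO.Lop h u) ∧
    (∀ M : PDO R d,
      (M.coeff 1 = (h : R) ∧ ∀ k : ℤ, 1 < k → M.coeff k = 0) → M * M = PDO.Lop h u →
        M.coeff 0 = 0 ∧ M.coeff (-1) = u * ((h⁻¹ : Rˣ) : R) ∧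
          M.coeff (-2) = -((2 : ℚ)⁻¹ • (d u * ((h⁻¹ : Rˣ) : R)))) := by
  have hd' : ∀ a b : R, d (a * b) = a * d b + b * d a := hd
  constructor
  · refine ⟨⟨SqrtAux.acoef d h u, ⟨1, fun n hn => SqrtAux.acoef_top (d := d) h u n hn⟩⟩,
      ⟨⟨SqrtAux.acoef_one (d := d) h u, fun k hk => SqrtAux.acoef_top (d := d) h u k hk⟩, ?_⟩, ?_⟩
    · exact (SqrtAux.key h u hdh _ (SqrtAux.acoef_one (d := d) h u)
        (fun k hk => SqrtAux.acoef_top (d := d) h u k hk)).mpr (SqrtAux.acoef_rec' (d := d) h u)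
    · rintro M' ⟨⟨h1', ht'⟩, hsq'⟩
      exact SqrtAux.coeff_unique h u M' _ h1' ht' (SqrtAux.acoef_one (d := d) h u)
        (fun k hk => SqrtAux.acoef_top (d := d) h u k hk)
        ((SqrtAux.key h u hdh M' h1' ht').mp hsq')
        (SqrtAux.acoef_rec' (d := d) h u)
  · rintro M ⟨h1, htop⟩ hsq
    exact SqrtAux.coeffs h u hd' hdh M.coeff h1
      ((SqrtAux.key h u hdh M h1 htop).mp hsq)
end

section
/- For n ≥ 0 set aₙ = 1/(2n+1)!! ∈ ℚ. Then for every integer ℓ ≥ 1 the number d_ℓ := (1/2) Σ_{i+j=ℓ−1, i,j≥0} (−1)^{j+1} aᵢ aⱼ equals 0 when ℓ is even, and equals −a_{ℓ−1}/(2ℓ) when ℓ is odd. -/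
lemma neg_one_pow_eq (a b : ℕ) (h : a % 2 = b % 2) : (-1 : ℚ) ^ a = (-1) ^ b := by
  conv_lhs => rw [← Nat.div_add_mod a 2]
  conv_rhs => rw [← Nat.div_add_mod b 2]
  rw [h, pow_add, pow_add, pow_mul, pow_mul]
  norm_num

lemma kdvA_zero : kdvA 0 = 1 := by simp [kdvA]

lemma kdvA_key (i : ℕ) : (2 * i + 1 : ℚ) * kdvA i = kdvA (i - 1) := by
  cases i with
  | zero => simp [kdvA]
  | succ n =>
    have hDpos : (0 : ℚ) < ((2 * n + 1).doubleFactorial : ℚ) := by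
      exact_mod_cast Nat.doubleFactorial_pos _
    unfold kdvA
    have h : 2 * (n + 1) + 1 = (2 * n + 1) + 2 := by ring
    rw [h, Nat.doubleFactorial_add_two]
    simp only [Nat.add_sub_cancel]
    push_cast
    rw [mul_one_div, div_eq_div_iff (by positivity) hDpos.ne']
    ring

/-- `d_ℓ := (1/2) Σ_(i+j=ℓ−1) (−1)^(j+1) aᵢaⱼ` is `0` for even `ℓ` and `−a_(ℓ−1)/(2ℓ)` for odd `ℓ`. -/
theorem d_ell_evaluation (l : ℕ) (hl : 1 ≤ l) :
    (2 : ℚ)⁻¹ * ∑ i ∈ Finset.range l, (-1 : ℚ) ^ (l - 1 - i + 1) * kdvA i * kdvA (l - 1 - i)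
      = if Even l then 0 else -kdvA (l - 1) / (2 * l) := by
  obtain ⟨m, rfl⟩ : ∃ m, l = m + 1 := ⟨l - 1, (Nat.succ_pred_eq_of_pos hl).symm⟩
  simp only [Nat.add_sub_cancel]
  set f : ℕ → ℚ := fun i => (-1 : ℚ) ^ (m - i + 1) * kdvA i * kdvA (m - i) with hf
  rcases Nat.even_or_odd m with hm | hm
  · -- m even, l = m+1 odd
    have hm2 : m % 2 = 0 := Nat.even_iff.mp hm
    rw [if_neg (by rw [Nat.even_add_one]; exact fun h => h hm)]
    set h : ℕ → ℚ := fun i => (-1 : ℚ) ^ i * kdvA (i - 1) * kdvA (m - i) with hh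
    have key : ∀ i ∈ Finset.range (m + 1), (2 * (m + 1) : ℚ) * f i = h (i + 1) - h i := by
      intro i hi
      rw [Finset.mem_range, Nat.lt_succ_iff] at hi
      have hsign : ((-1 : ℚ)) ^ (m - i + 1) = -(-1 : ℚ) ^ i := by
        rw [neg_one_pow_eq (m - i + 1) (i + 1) (by omega), pow_succ]
        ring
      have e1 : (2 * i + 1 : ℚ) * kdvA i = kdvA (i - 1) := kdvA_key i
      have e2 : (2 * ((m - i : ℕ) : ℚ) + 1) * kdvA (m - i) = kdvA (m - i - 1) :=
        kdvA_key (m - i)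
      have hcast : ((m - i : ℕ) : ℚ) = (m : ℚ) - i := by
        push_cast [Nat.cast_sub hi]; ring
      simp only [hh, hf, Nat.add_sub_cancel]
      have hmi : m - (i + 1) = m - i - 1 := by omega
      rw [hmi, ← e1, ← e2, hsign, pow_succ, hcast]
      ring
    have hsum : (2 * (m + 1) : ℚ) * ∑ i ∈ Finset.range (m + 1), f i = h (m + 1) - h 0 := by
      rw [Finset.mul_sum, Finset.sum_congr rfl key, Finset.sum_range_sub]
    have hval : h (m + 1) - h 0 = -2 * kdvA m := by
      have ha : m - (m + 1) = 0 := by omega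
      have hb : (0 : ℕ) - 1 = 0 := rfl
      simp only [hh, ha, Nat.add_sub_cancel, pow_zero, Nat.sub_zero, hb]
      rw [Odd.neg_one_pow (Even.add_one hm), kdvA_zero]
      ring
    have hS : (2 * ((m : ℚ) + 1)) * ∑ i ∈ Finset.range (m + 1), f i = -2 * kdvA m := by
      push_cast at hsum
      rw [hsum, hval]
    have hpos : (0 : ℚ) < 2 * ((m : ℚ) + 1) := by positivity
    push_cast
    rw [eq_div_iff hpos.ne']
    nlinarith [hS]
  · -- m odd, l = m+1 even
    have hm2 : m % 2 = 1 := Nat.odd_iff.mp hm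
    rw [if_pos (Nat.even_add_one.mpr (Nat.not_even_iff_odd.mpr hm))]
    have refl1 : ∑ i ∈ Finset.range (m + 1), f (m + 1 - 1 - i)
        = ∑ i ∈ Finset.range (m + 1), f i := Finset.sum_range_reflect f (m + 1)
    simp only [Nat.add_sub_cancel] at refl1
    have hneg : ∀ i ∈ Finset.range (m + 1), f (m - i) = -f i := by
      intro i hi
      rw [Finset.mem_range, Nat.lt_succ_iff] at hi
      simp only [hf]
      rw [Nat.sub_sub_self hi]
      have hsign : ((-1 : ℚ)) ^ (i + 1) = -(-1 : ℚ) ^ (m - i + 1) := by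
        rw [neg_one_pow_eq (i + 1) (m - i + 2) (by omega), pow_succ]
        ring
      rw [hsign]; ring
    have hz : ∑ i ∈ Finset.range (m + 1), f i = 0 := by
      have : ∑ i ∈ Finset.range (m + 1), f i = -∑ i ∈ Finset.range (m + 1), f i := by
        calc ∑ i ∈ Finset.range (m + 1), f i
            = ∑ i ∈ Finset.range (m + 1), f (m - i) := refl1.symm
          _ = ∑ i ∈ Finset.range (m + 1), -f i := Finset.sum_congr rfl hneg
          _ = -∑ i ∈ Finset.range (m + 1), f i := by
              rw [Finset.sum_neg_distrib]
      linarith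
    rw [hz]; ring
end

section
/- For n ≥ 0 set bₙ = (2n−1)!! ∈ ℚ (so b₀ = 1). Then for every integer ℓ ≥ 1 the number f_ℓ := (1/2) Σ_{i+j=ℓ−1, i,j≥0} (−1)^{i+1} bᵢ bⱼ equals 0 when ℓ is even, and equals −b_ℓ/(2ℓ) when ℓ is odd. -/
lemma kdvB_zero : kdvB 0 = 1 := by simp [kdvB, Nat.doubleFactorial]

lemma kdvB_succ (n : ℕ) : kdvB (n + 1) = (2 * n + 1) * kdvB n := by
  cases n with
  | zero => simp [kdvB, Nat.doubleFactorial]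
  | succ n =>
    rw [kdvB, kdvB, show 2 * (n + 1 + 1) - 1 = (2 * (n + 1) - 1) + 2 from by omega,
      Nat.doubleFactorial]
    push_cast [show (2 * (n + 1) - 1 : ℕ) + 2 = 2 * (n + 1) + 1 from by omega]
    ring

/-- `f_ℓ := (1/2) Σ_(i+j=ℓ−1) (−1)^(i+1) bᵢbⱼ` is `0` for even `ℓ` and `−b_ℓ/(2ℓ)` for odd `ℓ`. -/
theorem f_ell_evaluation (l : ℕ) (hl : 1 ≤ l) :
    (2 : ℚ)⁻¹ * ∑ i ∈ Finset.range l, (-1 : ℚ) ^ (i + 1) * kdvB i * kdvB (l - 1 - i)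
      = if Even l then 0 else -kdvB l / (2 * l) := by
  set S := ∑ i ∈ Finset.range l, (-1 : ℚ) ^ (i + 1) * kdvB i * kdvB (l - 1 - i) with hS
  by_cases hle : Even l
  · -- reflection: term at l-1-i is the negative of term at i
    have hrefl : S = -S := by
      conv_lhs => rw [hS, ← Finset.sum_range_reflect]
      rw [← Finset.sum_neg_distrib]
      apply Finset.sum_congr rfl
      intro i hi
      rw [Finset.mem_range] at hi
      rw [show l - 1 - (l - 1 - i) = i from by omega,
        show l - 1 - i + 1 = l - i from by omega]
      have h1 : ((-1 : ℚ)) ^ (l - i) = (-1) ^ (l + i) := by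
        rw [show l + i = (l - i) + 2 * i from by omega, pow_add, pow_mul]
        norm_num
      rw [h1, pow_add, hle.neg_one_pow, one_mul, pow_succ]
      ring
    have hS0 : S = 0 := by linarith
    simp [hS0, hle]
  · -- odd case
    simp only [if_neg hle]
    rw [Nat.not_even_iff_odd] at hle
    set A := ∑ i ∈ Finset.range (l + 1), (-1 : ℚ) ^ i * kdvB i * kdvB (l - i) with hA
    have key : 2 * (l : ℚ) * S = -2 * kdvB l := by
      have expand : 2 * (l : ℚ) * S =
          (∑ i ∈ Finset.range l, ((2 * i + 1 : ℚ)) * ((-1) ^ (i + 1) * kdvB i * kdvB (l - 1 - i)))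
          + ∑ i ∈ Finset.range l, ((2 * ((l - 1 - i : ℕ) : ℚ) + 1)) * ((-1) ^ (i + 1) * kdvB i * kdvB (l - 1 - i)) := by
        rw [hS, Finset.mul_sum, ← Finset.sum_add_distrib]
        apply Finset.sum_congr rfl
        intro i hi
        rw [Finset.mem_range] at hi
        have hc : (2 * (l : ℚ)) = (2 * i + 1) + (2 * ((l - 1 - i : ℕ) : ℚ) + 1) := by
          have h : ((l - 1 - i : ℕ) : ℚ) = (l : ℚ) - 1 - i := by
            have : (l - 1 - i : ℕ) + (1 + i) = l := by omega
            have := congrArg (fun n : ℕ => (n : ℚ)) this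
            push_cast at this
            linarith
          rw [h]; ring
        rw [hc]; ring
      have h1 : (∑ i ∈ Finset.range l, ((2 * i + 1 : ℚ)) * ((-1) ^ (i + 1) * kdvB i * kdvB (l - 1 - i)))
          = A - kdvB l := by
        have e1 : ∀ i ∈ Finset.range l,
            ((2 * i + 1 : ℚ)) * ((-1) ^ (i + 1) * kdvB i * kdvB (l - 1 - i))
            = (-1 : ℚ) ^ (i + 1) * kdvB (i + 1) * kdvB (l - (i + 1)) := by
          intro i hi
          rw [Finset.mem_range] at hi
          rw [kdvB_succ, show l - (i + 1) = l - 1 - i from by omega]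
          ring
        rw [Finset.sum_congr rfl e1, hA,
          Finset.sum_range_succ' (fun i => (-1 : ℚ) ^ i * kdvB i * kdvB (l - i)) l]
        simp [kdvB_zero]
      have h2 : (∑ i ∈ Finset.range l, ((2 * ((l - 1 - i : ℕ) : ℚ) + 1)) * ((-1) ^ (i + 1) * kdvB i * kdvB (l - 1 - i)))
          = -A - kdvB l := by
        have e2 : ∀ i ∈ Finset.range l,
            ((2 * ((l - 1 - i : ℕ) : ℚ) + 1)) * ((-1) ^ (i + 1) * kdvB i * kdvB (l - 1 - i))
            = -((-1 : ℚ) ^ i * kdvB i * kdvB (l - i)) := by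
          intro i hi
          rw [Finset.mem_range] at hi
          rw [show l - i = (l - 1 - i) + 1 from by omega, kdvB_succ]
          ring
        rw [Finset.sum_congr rfl e2]
        have : A = (∑ i ∈ Finset.range l, (-1 : ℚ) ^ i * kdvB i * kdvB (l - i))
            + (-1 : ℚ) ^ l * kdvB l * kdvB (l - l) := Finset.sum_range_succ _ l
        rw [Finset.sum_neg_distrib]
        rw [this, Nat.sub_self, kdvB_zero, hle.neg_one_pow]
        ring
      rw [expand, h1, h2]; ring
    have hl0 : (l : ℚ) ≠ 0 := by positivity
    field_simp
    linarith [key]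
end
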